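/- Let n ≥ 5 and 2 ≤ k < n/2 be integers, let K : ℝ → ℝ be C¹, and let ξ : ℝ → ℝ be C². Define F_k[ξ] as before and H(t,x,y) = 2^{-k}·C(n,k)·e^{(2k-n)x}(1-y²)^k - K(t)·e^{-nx}. Then for all t₁ ≤ t₂, H(t₂,ξ(t₂),ξ'(t₂)) - H(t₁,ξ(t₁),ξ'(t₁)) = ∫_{t₁}^{t₂} [ -n·(F_k[ξ](τ) - K(τ))·e^{-nξ(τ)}·ξ'(τ) - K'(τ)·e^{-nξ(τ)} ] dτ. -/

import Mathlib

open Real intervalIntegral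

theorem stmt_4 (n k : ℕ) (hn : 5 ≤ n) (hk : 2 ≤ k) (hkn : 2 * k < n)
    (K : ℝ → ℝ) (hK : ContDiff ℝ 1 K)
    (ξ : ℝ → ℝ) (hξ : ContDiff ℝ 2 ξ)
    (Fk : ℝ → ℝ)
    (hFk : ∀ t, Fk t = (2:ℝ) ^ ((1:ℝ) - (k:ℝ)) * ((n - 1).choose (k - 1) : ℝ) *
        Real.exp (2 * (k:ℝ) * ξ t) * (1 - (deriv ξ t) ^ 2) ^ (k - 1) *
        (deriv (deriv ξ) t + (((n:ℝ) - 2 * (k:ℝ)) / (2 * (k:ℝ))) * (1 - (deriv ξ t) ^ 2)))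
    (H : ℝ → ℝ → ℝ → ℝ)
    (hH : ∀ t x y, H t x y = (2:ℝ) ^ (-(k:ℝ)) * (n.choose k : ℝ) *
        Real.exp ((2 * (k:ℝ) - (n:ℝ)) * x) * (1 - y ^ 2) ^ k - K t * Real.exp (-(n:ℝ) * x)) :
    ∀ t₁ t₂ : ℝ, t₁ ≤ t₂ →
      H t₂ (ξ t₂) (deriv ξ t₂) - H t₁ (ξ t₁) (deriv ξ t₁) =
        ∫ τ in t₁..t₂, (-(n:ℝ) * (Fk τ - K τ) * Real.exp (-(n:ℝ) * ξ τ) * deriv ξ τ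
          - deriv K τ * Real.exp (-(n:ℝ) * ξ τ)) := by
  intro t₁ t₂ h12
  -- regularity facts
  have hξ2 : ContDiff ℝ ((1:ℕ)+1) ξ := by exact_mod_cast hξ
  have hξd : ContDiff ℝ 1 (deriv ξ) := (contDiff_succ_iff_deriv.mp hξ2).2.2
  have hd : ∀ t, HasDerivAt ξ (deriv ξ t) t := fun t =>
    ((hξ.differentiable (by norm_num)) t).hasDerivAt
  have hd2 : ∀ t, HasDerivAt (deriv ξ) (deriv (deriv ξ) t) t := fun t =>
    ((hξd.differentiable one_ne_zero) t).hasDerivAt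
  have hdK : ∀ t, HasDerivAt K (deriv K t) t := fun t =>
    ((hK.differentiable one_ne_zero) t).hasDerivAt
  -- continuity pieces
  have hcξ : Continuous ξ := hξ.continuous
  have hcd : Continuous (deriv ξ) := hξd.continuous
  have hcd2 : Continuous (deriv (deriv ξ)) := hξd.continuous_deriv le_rfl
  have hcK : Continuous K := hK.continuous
  have hcK' : Continuous (deriv K) := hK.continuous_deriv le_rfl
  have hcFk : Continuous Fk := by
    have : Fk = fun t => (2:ℝ) ^ ((1:ℝ) - (k:ℝ)) * ((n - 1).choose (k - 1) : ℝ) *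
        Real.exp (2 * (k:ℝ) * ξ t) * (1 - (deriv ξ t) ^ 2) ^ (k - 1) *
        (deriv (deriv ξ) t + (((n:ℝ) - 2 * (k:ℝ)) / (2 * (k:ℝ))) * (1 - (deriv ξ t) ^ 2)) :=
      funext hFk
    rw [this]; fun_prop
  have hcInt : Continuous (fun τ => -(n:ℝ) * (Fk τ - K τ) * Real.exp (-(n:ℝ) * ξ τ) * deriv ξ τ
      - deriv K τ * Real.exp (-(n:ℝ) * ξ τ)) := by fun_prop
  -- binomial identity
  have hC : (k:ℝ) * (n.choose k : ℝ) = (n:ℝ) * ((n-1).choose (k-1) : ℝ) := by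
    have h := Nat.add_one_mul_choose_eq (n-1) (k-1)
    have h1 : n - 1 + 1 = n := by omega
    have h2 : k - 1 + 1 = k := by omega
    rw [h1, h2] at h
    exact_mod_cast congrArg (Nat.cast (R := ℝ)) ((Nat.mul_comm k (n.choose k)).trans h.symm)
  -- the fundamental theorem of calculus
  rw [show (∀ t x y, H t x y = _) from hH, hH]
  rw [eq_comm]
  have key : ∀ t ∈ Set.uIcc t₁ t₂,
      HasDerivAt (fun t => (2:ℝ) ^ (-(k:ℝ)) * (n.choose k : ℝ) *
        Real.exp ((2 * (k:ℝ) - (n:ℝ)) * ξ t) * (1 - (deriv ξ t) ^ 2) ^ k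
        - K t * Real.exp (-(n:ℝ) * ξ t))
      (-(n:ℝ) * (Fk t - K t) * Real.exp (-(n:ℝ) * ξ t) * deriv ξ t
        - deriv K t * Real.exp (-(n:ℝ) * ξ t)) t := by
    intro t _
    have e1 : HasDerivAt (fun t => Real.exp ((2 * (k:ℝ) - (n:ℝ)) * ξ t))
        (Real.exp ((2 * (k:ℝ) - (n:ℝ)) * ξ t) * ((2 * (k:ℝ) - (n:ℝ)) * deriv ξ t)) t :=
      ((hd t).const_mul _).exp
    have e2 : HasDerivAt (fun t => (1 - (deriv ξ t) ^ 2) ^ k)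
        ((k:ℝ) * (1 - (deriv ξ t) ^ 2) ^ (k-1) *
          (-(2 * deriv ξ t ^ 1 * deriv (deriv ξ) t))) t :=
      (((hd2 t).pow 2).const_sub 1).pow k
    have e3 : HasDerivAt (fun t => K t * Real.exp (-(n:ℝ) * ξ t))
        (deriv K t * Real.exp (-(n:ℝ) * ξ t)
          + K t * (Real.exp (-(n:ℝ) * ξ t) * (-(n:ℝ) * deriv ξ t))) t :=
      (hdK t).mul ((hd t).const_mul _).exp
    have e4 := (((e1.const_mul ((2:ℝ) ^ (-(k:ℝ)) * (n.choose k : ℝ))).mul e2).sub e3)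
    refine e4.congr_deriv (Eq.symm ?_)
    -- derivative identity
    rw [hFk t]
    set y := deriv ξ t
    set z := deriv (deriv ξ) t
    have hexp : Real.exp ((2 * (k:ℝ) - (n:ℝ)) * ξ t)
        = Real.exp (2 * (k:ℝ) * ξ t) * Real.exp (-(n:ℝ) * ξ t) := by
      rw [← Real.exp_add]; ring_nf
    have hk0 : (k:ℝ) ≠ 0 := by positivity
    have hpow : (1 - y^2)^k = (1-y^2)^(k-1) * (1-y^2) := by
      conv_lhs => rw [show k = (k-1)+1 by omega, pow_succ]
    have hrp : (2:ℝ) ^ ((1:ℝ) - (k:ℝ)) = 2 * (2:ℝ) ^ (-(k:ℝ)) := by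
      rw [show (1:ℝ) - (k:ℝ) = 1 + (-(k:ℝ)) by ring, rpow_add two_pos, rpow_one]
    have hC' : (n.choose k : ℝ) = (n:ℝ) * ((n-1).choose (k-1) : ℝ) / k := by
      field_simp; linarith [hC]
    rw [hexp, hpow, hrp, hC']
    field_simp
    ring
  rw [intervalIntegral.integral_eq_sub_of_hasDerivAt key
    (hcInt.intervalIntegrable t₁ t₂)]
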